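/- Let (Ω, 𝒜, P) be a probability space, let E be a nonempty standard Borel space, F a measurable space, and ℝ the real line. Let X : Ω → E and ε : Ω → F be measurable with X and ε independent under P, let μ_ε denote the law of ε, let g : E × F → ℝ be measurable, and define Y := ω ↦ g(X(ω), ε(ω)). Then the conditional distribution of Y given X satisfies, for (P ∘ X⁻¹)-almost every x ∈ E, condDistrib Y X P (x) = μ_ε.map (u ↦ g(x, u)); i.e. the conditional law of Y given X = x is the pushforward of the noise law under g(x, ·). -/

import Mathlib

open MeasureTheory ProbabilityTheory

/-- Forward direction of Lemma 1 of the paper: if `Y = g(X, ε)` with `ε` independent of `X`,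
then for `(P ∘ X⁻¹)`-almost every `x`, the conditional distribution of `Y` given `X = x` is
the pushforward of the law of `ε` under `g(x, ·)`. -/
theorem stmt_8 {Ω E F : Type*} [MeasurableSpace Ω]
    [MeasurableSpace E] [StandardBorelSpace E] [Nonempty E]
    [MeasurableSpace F]
    (P : Measure Ω) [IsProbabilityMeasure P]
    (X : Ω → E) (ε : Ω → F) (hX : Measurable X) (hε : Measurable ε)
    (hindep : IndepFun X ε P)
    (g : E × F → ℝ) (hg : Measurable g)
    (Y : Ω → ℝ) (hY : Y = fun ω => g (X ω, ε ω)) :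
    ∀ᵐ x ∂(P.map X),
      condDistrib Y X P x = (P.map ε).map (fun u => g (x, u)) := by
  subst hY
  have hYm : Measurable fun ω => g (X ω, ε ω) := hg.comp (hX.prodMk hε)
  have hμε : IsProbabilityMeasure (P.map ε) := Measure.isProbabilityMeasure_map hε.aemeasurable
  have hμX : IsProbabilityMeasure (P.map X) := Measure.isProbabilityMeasure_map hX.aemeasurable
  -- the candidate kernel
  set κ : ProbabilityTheory.Kernel E ℝ :=
    ProbabilityTheory.Kernel.map
      ((ProbabilityTheory.Kernel.deterministic (id : E → E) measurable_id) ×ₖ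
        ProbabilityTheory.Kernel.const E (P.map ε)) g with hκdef
  have hκ_apply : ∀ x : E, κ x = (P.map ε).map (fun u => g (x, u)) := by
    intro x
    rw [hκdef, ProbabilityTheory.Kernel.map_apply _ hg,
      ProbabilityTheory.Kernel.prod_apply, ProbabilityTheory.Kernel.deterministic_apply,
      ProbabilityTheory.Kernel.const_apply, Measure.dirac_prod, Measure.map_map hg]
    · rfl
    · exact measurable_prodMk_left
  have hprod : P.map (fun ω => (X ω, ε ω)) = (P.map X).prod (P.map ε) :=
    (ProbabilityTheory.indepFun_iff_map_prod_eq_prod_map_map hX.aemeasurable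
      hε.aemeasurable).mp hindep
  have hcomp : P.map (fun ω => (X ω, g (X ω, ε ω))) = (P.map X) ⊗ₘ κ := by
    have hf : Measurable fun p : E × F => (p.1, g p) := measurable_fst.prodMk hg
    have h1 : P.map (fun ω => (X ω, g (X ω, ε ω))) =
        (P.map (fun ω => (X ω, ε ω))).map (fun p : E × F => (p.1, g p)) := by
      rw [Measure.map_map hf (hX.prodMk hε)]
      rfl
    rw [h1, hprod]
    ext s hs
    rw [Measure.map_apply hf hs, Measure.compProd_apply hs,
      Measure.prod_apply (hf hs)]
    refine lintegral_congr fun x => ?_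
    rw [hκ_apply x,
      Measure.map_apply (f := fun u => g (x, u)) (hg.comp measurable_prodMk_left)
      (measurable_prodMk_left hs)]
    rfl
  filter_upwards [condDistrib_ae_eq_of_measure_eq_compProd_of_measurable hX hYm hcomp] with x hx
  rw [hx, hκ_apply x]
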